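/- Let n ≥ 2, N = n(n−1)/2, and let A = (a_{pq}) be an n×n real symmetric matrix. Suppose 1 ≤ i < j ≤ n are such that |a_{ij}| = max_{p≠q} |a_{pq}|, and suppose J = J(i,j;c,s) is a Jacobi rotation such that B = Jᵀ A J satisfies b_{ij} = 0. Then ‖off(B)‖_F² ≤ (1 − 1/N) ‖off(A)‖_F². -/

import Mathlib

open Matrix

noncomputable def specNorm {m n : ℕ} (A : Matrix (Fin m) (Fin n) ℝ) : ℝ :=
  ‖LinearMap.toContinuousLinearMap (Matrix.toEuclideanLin A)‖

noncomputable def frobNorm {m n : ℕ} (A : Matrix (Fin m) (Fin n) ℝ) : ℝ :=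
  Real.sqrt (∑ p, ∑ q, (A p q) ^ 2)

def offDiag {n : ℕ} (A : Matrix (Fin n) (Fin n) ℝ) : Matrix (Fin n) (Fin n) ℝ :=
  fun p q => if p = q then 0 else A p q

def jacobiRot {n : ℕ} (i j : Fin n) (c s : ℝ) : Matrix (Fin n) (Fin n) ℝ :=
  fun p q =>
    if p = i ∧ q = i then c
    else if p = j ∧ q = j then c
    else if p = i ∧ q = j then s
    else if p = j ∧ q = i then -s
    else if p = q then 1 else 0

open Classical in
noncomputable def eigValsDesc {n : ℕ} (A : Matrix (Fin n) (Fin n) ℝ) : Fin n → ℝ :=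
  if hA : A.IsHermitian then
    fun k => (hA.eigenvalues ∘ Tuple.sort hA.eigenvalues) k.rev
  else 0

noncomputable def singValsDesc {m n : ℕ} (A : Matrix (Fin m) (Fin n) ℝ) : Fin n → ℝ :=
  fun k => Real.sqrt (eigValsDesc (Aᵀ * A) k)
-- sum over a two-element support
lemma sum_two {n : ℕ} (i j : Fin n) (hij : i ≠ j) (f : Fin n → ℝ)
    (hf : ∀ t, t ≠ i → t ≠ j → f t = 0) : ∑ t, f t = f i + f j := by
  classical
  rw [← Finset.sum_subset (Finset.subset_univ ({i, j} : Finset (Fin n)))]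
  · rw [Finset.sum_insert (by simp [hij]), Finset.sum_singleton]
  · intro x _ hx
    simp only [Finset.mem_insert, Finset.mem_singleton, not_or] at hx
    exact hf x hx.1 hx.2

lemma sum_pair_congr {n : ℕ} (i j : Fin n) (hij : i ≠ j) (f g : Fin n → ℝ)
    (h1 : ∀ p, p ≠ i → p ≠ j → f p = g p) (h2 : f i + f j = g i + g j) :
    ∑ p, f p = ∑ p, g p := by
  have h := sum_two i j hij (fun t => f t - g t) (by
    intro t ht1 ht2; simp [h1 t ht1 ht2])
  rw [Finset.sum_sub_distrib] at h
  linarith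




lemma mulJ {n : ℕ} (i j : Fin n) (hij : i ≠ j) (c s : ℝ) (M : Matrix (Fin n) (Fin n) ℝ)
    (p q : Fin n) :
    (M * jacobiRot i j c s) p q =
      if q = i then c * M p i - s * M p j
      else if q = j then s * M p i + c * M p j
      else M p q := by
  rw [Matrix.mul_apply]
  split_ifs with hqi hqj
  · rw [sum_two i j hij _ (fun t ht1 ht2 => by
      simp [jacobiRot, hqi, ht1, ht2, hij.symm])]
    simp [jacobiRot, hqi, hij, hij.symm]
    ring
  · rw [sum_two i j hij _ (fun t ht1 ht2 => by
      simp [jacobiRot, hqj, ht1, ht2, hij])]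
    simp [jacobiRot, hqj, hij, hij.symm]
    ring
  · rw [Finset.sum_eq_single q]
    · simp [jacobiRot, hqi, hqj]
    · intro t _ ht
      simp [jacobiRot, hqi, hqj, ht]
    · simp

lemma Jt_mul {n : ℕ} (i j : Fin n) (hij : i ≠ j) (c s : ℝ) (M : Matrix (Fin n) (Fin n) ℝ)
    (p q : Fin n) :
    ((jacobiRot i j c s)ᵀ * M) p q =
      if p = i then c * M i q - s * M j q
      else if p = j then s * M i q + c * M j q
      else M p q := by
  rw [Matrix.mul_apply]
  simp only [Matrix.transpose_apply]
  split_ifs with hpi hpj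
  · rw [sum_two i j hij _ (fun t ht1 ht2 => by
      simp [jacobiRot, hpi, ht1, ht2, hij.symm])]
    simp [jacobiRot, hpi, hij, hij.symm]
    ring
  · rw [sum_two i j hij _ (fun t ht1 ht2 => by
      simp [jacobiRot, hpj, ht1, ht2, hij])]
    simp [jacobiRot, hpj, hij, hij.symm]
  · rw [Finset.sum_eq_single p]
    · simp [jacobiRot, hpi, hpj]
    · intro t _ ht
      simp [jacobiRot, hpi, hpj, ht]
    · simp

theorem classical_jacobi_step' {n : ℕ} (hn : 2 ≤ n) (N : ℕ) (hN : N = n * (n - 1) / 2)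
    (A : Matrix (Fin n) (Fin n) ℝ) (hA : Aᵀ = A)
    (i j : Fin n) (hij : i < j)
    (hmax : ∀ p q : Fin n, p ≠ q → |A p q| ≤ |A i j|)
    (c s : ℝ) (hcs : c ^ 2 + s ^ 2 = 1)
    (B : Matrix (Fin n) (Fin n) ℝ)
    (hB : B = (jacobiRot i j c s)ᵀ * A * jacobiRot i j c s)
    (hzero : B i j = 0) :
    (∑ p, ∑ q, (offDiag B p q)^2) ≤ (1 - 1 / (N : ℝ)) * (∑ p, ∑ q, (offDiag A p q)^2) := by
  have hij' : i ≠ j := Fin.ne_of_lt hij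
  have hsym : A j i = A i j := by
    have := congrFun (congrFun hA i) j; simpa using this
  set D := (jacobiRot i j c s)ᵀ * A with hDdef
  have hD : ∀ p q, D p q =
      if p = i then c * A i q - s * A j q
      else if p = j then s * A i q + c * A j q
      else A p q := fun p q => Jt_mul i j hij' c s A p q
  have hBf : ∀ p q, B p q =
      if q = i then c * D p i - s * D p j
      else if q = j then s * D p i + c * D p j
      else D p q := by
    intro p q
    rw [hB]
    exact mulJ i j hij' c s D p q
  have hBci : ∀ p, B p i = c * D p i - s * D p j := fun p => by
    rw [hBf p i, if_pos rfl]
  have hBcj : ∀ p, B p j = s * D p i + c * D p j := fun p => by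
    rw [hBf p j, if_neg hij'.symm, if_pos rfl]
  have hDri : ∀ q, D i q = c * A i q - s * A j q := fun q => by
    rw [hD i q, if_pos rfl]
  have hDrj : ∀ q, D j q = s * A i q + c * A j q := fun q => by
    rw [hD j q, if_neg hij'.symm, if_pos rfl]
  -- Frobenius invariance
  have hFB : ∑ p, ∑ q, (B p q)^2 = ∑ p, ∑ q, (D p q)^2 := by
    refine Finset.sum_congr rfl fun p _ => ?_
    refine sum_pair_congr i j hij' _ _ (fun q h1 h2 => by rw [hBf p q]; simp [h1, h2]) ?_
    rw [hBci p, hBcj p]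
    linear_combination ((D p i)^2 + (D p j)^2) * hcs
  have hFD : ∑ p, ∑ q, (D p q)^2 = ∑ p, ∑ q, (A p q)^2 := by
    rw [Finset.sum_comm, show (∑ p, ∑ q, (A p q)^2) = ∑ q, ∑ p, (A p q)^2 from Finset.sum_comm]
    refine Finset.sum_congr rfl fun q _ => ?_
    refine sum_pair_congr i j hij' _ _ (fun p h1 h2 => by rw [hD p q]; simp [h1, h2]) ?_
    rw [hDri q, hDrj q]
    linear_combination ((A i q)^2 + (A j q)^2) * hcs
  -- explicit pivot entries
  have hBii : B i i = c * (c * A i i - s * A i j) - s * (c * A i j - s * A j j) := by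
    rw [hBci i, hDri i, hDri j, hsym]
  have hBjj : B j j = s * (s * A i i + c * A i j) + c * (s * A i j + c * A j j) := by
    rw [hBcj j, hDrj i, hDrj j, hsym]
  have hz : s * (c * A i i - s * A i j) + c * (c * A i j - s * A j j) = 0 := by
    rw [← hzero, hBcj i, hDri i, hDri j, hsym]
  -- diagonal sum
  have hdiag : ∑ p, (B p p)^2 = (∑ p, (A p p)^2) + 2 * (A i j)^2 := by
    have key : ∑ p, (B p p)^2 = ∑ p, ((A p p)^2 +
        (if p = i then (A i j)^2 else if p = j then (A i j)^2 else 0)) := by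
      refine sum_pair_congr i j hij' _ _ ?_ ?_
      · intro p h1 h2
        rw [hBf p p, if_neg h1, if_neg h2, hD p p, if_neg h1, if_neg h2]
        simp [h1, h2]
      · have e1 : (if i = i then (A i j)^2 else if i = j then (A i j)^2 else 0)
            = (A i j)^2 := by simp
        have e2 : (if j = i then (A i j)^2 else if j = j then (A i j)^2 else 0)
            = (A i j)^2 := by simp [hij'.symm]
        rw [hBii, hBjj, e1, e2]
        linear_combination ((1 + c^2 + s^2) * ((A i i)^2 + 2*(A i j)^2 + (A j j)^2)) * hcs
          - 2 * (c*s*A i i + (c^2 - s^2)*A i j - c*s*A j j) * hz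
    rw [key, Finset.sum_add_distrib]
    congr 1
    rw [sum_two i j hij' _ (fun t h1 h2 => by simp [h1, h2])]
    simp [hij'.symm]
    ring
  -- off-diagonal sum formula
  have hoff : ∀ M : Matrix (Fin n) (Fin n) ℝ,
      ∑ p, ∑ q, (offDiag M p q)^2 = (∑ p, ∑ q, (M p q)^2) - ∑ p, (M p p)^2 := by
    intro M
    rw [← Finset.sum_sub_distrib]
    refine Finset.sum_congr rfl fun p _ => ?_
    have h1 : ∀ q, (offDiag M p q)^2 = (M p q)^2 - (if q = p then (M p p)^2 else 0) := by
      intro q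
      by_cases h : p = q
      · subst h; simp [offDiag]
      · simp [offDiag, h, Ne.symm h]
    rw [Finset.sum_congr rfl (fun q _ => h1 q), Finset.sum_sub_distrib, Finset.sum_ite_eq']
    simp
  -- the main identity
  have hmain : ∑ p, ∑ q, (offDiag B p q)^2
      = (∑ p, ∑ q, (offDiag A p q)^2) - 2 * (A i j)^2 := by
    rw [hoff B, hoff A, hFB, hFD, hdiag]; ring
  -- counting bound
  have hNn : N * 2 = n * (n - 1) := by
    have hev : 2 ∣ n * (n - 1) := by
      rcases Nat.even_or_odd n with h | h
      · obtain ⟨k, hk⟩ := h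
        exact ⟨k * (n - 1), by rw [hk]; ring⟩
      · obtain ⟨k, hk⟩ := h
        have hk' : n - 1 = 2 * k := by omega
        exact ⟨n * k, by rw [hk']; ring⟩
    rw [hN]
    exact Nat.div_mul_cancel hev
  have hN1 : 1 ≤ N := by
    have h2 : 2 ≤ n * (n - 1) := by
      calc 2 = 2 * 1 := rfl
      _ ≤ n * (n - 1) := Nat.mul_le_mul hn (by omega)
    omega
  have hNpos : (0:ℝ) < (N:ℝ) := by exact_mod_cast Nat.lt_of_lt_of_le Nat.zero_lt_one hN1
  have hbound : (∑ p, ∑ q, (offDiag A p q)^2) ≤ 2 * (A i j)^2 * (N:ℝ) := by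
    have step1 : (∑ p, ∑ q, (offDiag A p q)^2)
        ≤ ∑ p : Fin n, ∑ q : Fin n, (if p = q then 0 else (A i j)^2) := by
      refine Finset.sum_le_sum fun p _ => Finset.sum_le_sum fun q _ => ?_
      by_cases h : p = q
      · simp [offDiag, h]
      · simp only [offDiag, if_neg h]
        have h1 := hmax p q h
        have h2 := pow_le_pow_left₀ (abs_nonneg (A p q)) h1 2
        simpa [sq_abs] using h2
    have step2 : (∑ p : Fin n, ∑ q : Fin n, (if p = q then 0 else (A i j)^2))
        = 2 * (A i j)^2 * (N:ℝ) := by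
      have inner : ∀ p : Fin n, (∑ q : Fin n, (if p = q then 0 else (A i j)^2))
          = (n:ℝ) * (A i j)^2 - (A i j)^2 := by
        intro p
        have h1 : ∀ q : Fin n, (if p = q then 0 else (A i j)^2)
            = (A i j)^2 - (if q = p then (A i j)^2 else 0) := by
          intro q
          by_cases h : p = q
          · subst h; simp
          · simp [h, Ne.symm h]
        rw [Finset.sum_congr rfl (fun q _ => h1 q), Finset.sum_sub_distrib,
          Finset.sum_ite_eq']
        simp [mul_comm]
      rw [Finset.sum_congr rfl (fun p _ => inner p)]
      rw [Finset.sum_const, Finset.card_univ, Fintype.card_fin, nsmul_eq_mul]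
      have h2N : ((N:ℝ) * 2) = (n:ℝ) * ((n:ℝ) - 1) := by
        have : ((N * 2 : ℕ) : ℝ) = ((n * (n-1) : ℕ) : ℝ) := congrArg (Nat.cast : ℕ → ℝ) hNn
        push_cast [Nat.cast_sub (by omega : 1 ≤ n)] at this
        linarith
      nlinarith [h2N]
    exact step1.trans (le_of_eq step2)
  -- conclude
  rw [hmain]
  have hdiv : (∑ p, ∑ q, (offDiag A p q)^2) / (N:ℝ) ≤ 2 * (A i j)^2 :=
    (div_le_iff₀ hNpos).mpr hbound
  have hexp : (1 - 1/(N:ℝ)) * (∑ p, ∑ q, (offDiag A p q)^2)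
      = (∑ p, ∑ q, (offDiag A p q)^2) - (∑ p, ∑ q, (offDiag A p q)^2) / (N:ℝ) := by
    ring
  rw [hexp]
  linarith

/-- One classical Jacobi step with the optimal pivot reduces the squared
off-diagonal Frobenius norm by a factor `1 - 1/N`, `N = n(n-1)/2`. -/
theorem classical_jacobi_step {n : ℕ} (hn : 2 ≤ n) (N : ℕ) (hN : N = n * (n - 1) / 2)
    (A : Matrix (Fin n) (Fin n) ℝ) (hA : Aᵀ = A)
    (i j : Fin n) (hij : i < j)
    (hmax : ∀ p q : Fin n, p ≠ q → |A p q| ≤ |A i j|)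
    (c s : ℝ) (hcs : c ^ 2 + s ^ 2 = 1)
    (B : Matrix (Fin n) (Fin n) ℝ)
    (hB : B = (jacobiRot i j c s)ᵀ * A * jacobiRot i j c s)
    (hzero : B i j = 0) :
    frobNorm (offDiag B) ^ 2 ≤ (1 - 1 / (N : ℝ)) * frobNorm (offDiag A) ^ 2 := by
  have key := classical_jacobi_step' hn N hN A hA i j hij hmax c s hcs B hB hzero
  have hB2 : frobNorm (offDiag B) ^ 2 = ∑ p, ∑ q, (offDiag B p q)^2 := by
    unfold frobNorm
    exact Real.sq_sqrt (by positivity)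
  have hA2 : frobNorm (offDiag A) ^ 2 = ∑ p, ∑ q, (offDiag A p q)^2 := by
    unfold frobNorm
    exact Real.sq_sqrt (by positivity)
  rw [hB2, hA2]
  exact key
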